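/- For every (x̄, ȳ, z̄) ∈ (Ω ∩ C) × dom(∂g*) × dom(h₂*) and c̄ = 1/g(x̄), the Fréchet subdifferential of Q at (x̄, ȳ, z̄, c̄) contains the product set whose components are: (in x) (2c̄ + c̄²(g*(ȳ) − ⟨x̄,ȳ⟩))·∂̂f_C(x̄) − c̄² f_C(x̄) ȳ + ∇h₁(x̄) − z̄; (in y) c̄² f_C(x̄)·∂g*(ȳ) − c̄² f_C(x̄) x̄; (in z) ∂̂h₂*(z̄) − x̄; (in c) the singleton {2 f_C(x̄) + 2c̄ f_C(x̄)(g*(ȳ) − ⟨x̄,ȳ⟩)}. -/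

import Mathlib

open Filter Topology Set
open scoped Classical

noncomputable section

/-- `En n` is the Euclidean space `ℝⁿ`. -/
abbrev En (n : ℕ) := EuclideanSpace ℝ (Fin n)

variable {n : ℕ}

/-- `Ω := {x : g x ≠ 0}`. -/
def Omeg (g : En n → ℝ) : Set (En n) := {x | g x ≠ 0}

/-- The extended objective `F` of the fractional program (P), with `h = h₁ - h₂`:
`F x = f x / g x + (h₁ x - h₂ x)` on `Ω ∩ C` and `+∞` elsewhere. -/
def Fobj (f g h₁ h₂ : En n → ℝ) (C : Set (En n)) (x : En n) : EReal :=
  if x ∈ Omeg g ∩ C then ((f x / g x + (h₁ x - h₂ x) : ℝ) : EReal) else ⊤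

/-- The objective `F̃` of the min-max reformulation:
`F̃(x,c) = 2 c f x - c² f x g x + h x + ι_{Ω∩C}(x)`. -/
def Ftil (f g h₁ h₂ : En n → ℝ) (C : Set (En n)) (x : En n) (c : ℝ) : EReal :=
  if x ∈ Omeg g ∩ C then
    ((2 * c * f x - c ^ 2 * f x * g x + (h₁ x - h₂ x) : ℝ) : EReal) else ⊤

/-- The Fréchet subdifferential of an extended-real-valued function on `ℝⁿ`. -/
def fsubdiff (φ : En n → EReal) (x : En n) : Set (En n) :=
  {y | φ x ≠ ⊤ ∧ ∀ ε : ℝ, 0 < ε →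
      ∀ᶠ z in 𝓝 x, φ x + (((inner ℝ y (z - x) : ℝ) - ε * ‖z - x‖ : ℝ) : EReal) ≤ φ z}

/-- The convex (classical) subdifferential of a real-valued function on `ℝⁿ`. -/
def convSubdiff (φ : En n → ℝ) (x : En n) : Set (En n) :=
  {y | ∀ z, φ x + (inner ℝ y (z - x) : ℝ) ≤ φ z}

/-- The convex subdifferential of an extended-real-valued function on `ℝⁿ`. -/
def eSubdiff (φ : En n → EReal) (x : En n) : Set (En n) :=
  {y | ∀ z, φ x + (((inner ℝ y (z - x) : ℝ)) : EReal) ≤ φ z}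

/-- The convex conjugate of a real-valued function. -/
def conjF (φ : En n → ℝ) (y : En n) : EReal :=
  ⨆ x : En n, (((inner ℝ x y : ℝ) - φ x : ℝ) : EReal)

/-- The auxiliary function `Q`. -/
def Qaux (f g h₁ h₂ : En n → ℝ) (C : Set (En n)) (x y z : En n) (c : ℝ) : EReal :=
  if x ∈ C ∧ conjF g y ≠ ⊤ ∧ conjF h₂ z ≠ ⊤ then
    ((2 * c * f x + c ^ 2 * f x * ((conjF g y).toReal - (inner ℝ x y : ℝ))
        + h₁ x + (conjF h₂ z).toReal - (inner ℝ x z : ℝ) : ℝ) : EReal)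
  else ⊤

/-- The proximal operator (as a set) of `t • (f + ι_C)` at `v`. -/
def proxfC (f : En n → ℝ) (C : Set (En n)) (t : ℝ) (v : En n) : Set (En n) :=
  {z | z ∈ C ∧ ∀ w ∈ C, t * f z + ‖v - z‖ ^ 2 / 2 ≤ t * f w + ‖v - w‖ ^ 2 / 2}

/-- The standing assumptions on the data of problem (P). -/
def StandingAssumptions (f g h₁ h₂ : En n → ℝ) (C : Set (En n)) : Prop :=
  (∀ x, 0 ≤ f x) ∧ (∀ x, 0 ≤ g x) ∧
  LowerSemicontinuous f ∧ LowerSemicontinuous g ∧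
  LowerSemicontinuous (fun x => h₁ x - h₂ x) ∧
  IsClosed C ∧ (Omeg g ∩ C).Nonempty ∧
  (∀ x ∈ Omeg g, ∃ s ∈ 𝓝 x, ∃ K : NNReal, LipschitzOnWith K f s) ∧
  ConvexOn ℝ univ g ∧ ConvexOn ℝ univ h₂ ∧
  (∀ x ∈ Omeg g, ∃ δ > 0, (∀ y ∈ Metric.ball x δ, HasGradientAt h₁ (gradient h₁ y) y) ∧
      ∃ K : NNReal, LipschitzOnWith K (gradient h₁) (Metric.ball x δ))

/-- An admissible run of the alternating maximization proximal descent algorithm (AMPDA),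
including the backtracking line-search data: at iteration `k`, the trial points
`trial k j` are computed with stepsizes `αtil k * γ ^ j`, the trials `j < J k` fail the
acceptance test, and `x (k+1) = trial k (J k)` is accepted. -/
structure AMPDA (f g h₁ h₂ : En n → ℝ) (C : Set (En n)) (x0 : En n)
    (αlo αhi σ γ : ℝ) : Type where
  x : ℕ → En n
  y : ℕ → En n
  z : ℕ → En n
  c : ℕ → ℝ
  αtil : ℕ → ℝ
  J : ℕ → ℕ
  trial : ℕ → ℕ → En n
  hx0 : x 0 = x0
  hc : ∀ k, c k = 1 / g (x k)
  hy : ∀ k, y k ∈ convSubdiff g (x k)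
  hz : ∀ k, z k ∈ convSubdiff h₂ (x k)
  hαtil : ∀ k, αlo ≤ αtil k ∧ αtil k ≤ αhi
  htrial : ∀ k j, trial k j ∈ proxfC f C (αtil k * γ ^ j * c k)
      (x k - (αtil k * γ ^ j) • (gradient h₁ (x k) - z k - (c k ^ 2 * f (x k)) • y k))
  hfail : ∀ k, ∀ j < J k, ¬ (trial k j ∈ Omeg g ∧
      Qaux f g h₁ h₂ C (trial k j) (y k) (z k) (1 / g (trial k j))
          + ((σ / 2 * ‖trial k j - x k‖ ^ 2 : ℝ) : EReal)
        ≤ Fobj f g h₁ h₂ C (x k))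
  hstep : ∀ k, x (k + 1) = trial k (J k)
  hmem : ∀ k, x (k + 1) ∈ Omeg g
  haccept : ∀ k,
      Qaux f g h₁ h₂ C (x (k + 1)) (y k) (z k) (1 / g (x (k + 1)))
          + ((σ / 2 * ‖x (k + 1) - x k‖ ^ 2 : ℝ) : EReal)
        ≤ Fobj f g h₁ h₂ C (x k)

/-- The accepted stepsize `α_k` of AMPDA at iteration `k`. -/
def AMPDA.step {f g h₁ h₂ : En n → ℝ} {C : Set (En n)} {x0 : En n} {αlo αhi σ γ : ℝ}
    (A : AMPDA f g h₁ h₂ C x0 αlo αhi σ γ) (k : ℕ) : ℝ := A.αtil k * γ ^ A.J k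

/-- `x⋆` is a critical point of `F`. -/
def isCriticalPt (f g h₁ h₂ : En n → ℝ) (C : Set (En n)) (xs : En n) : Prop :=
  g xs ≠ 0 ∧
  ∃ u ∈ fsubdiff (fun x : En n => if x ∈ C then (((1 / g xs) * f x : ℝ) : EReal) else ⊤) xs,
  ∃ ys ∈ convSubdiff g xs, ∃ zs ∈ convSubdiff h₂ xs,
    (0 : En n) = u - ((1 / g xs) ^ 2 * f xs) • ys + gradient h₁ xs - zs

/-- `xb` is an `ε`-critical point of `F`. -/
def epsCrit (f g h₁ h₂ : En n → ℝ) (C : Set (En n)) (ε : ℝ) (xb : En n) : Prop :=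
  g xb ≠ 0 ∧ ∃ α : ℝ, 0 < α ∧ ∃ yb ∈ convSubdiff g xb, ∃ zb ∈ convSubdiff h₂ xb,
    (proxfC f C (α * (1 / g xb))
        (xb - α • (gradient h₁ xb - zb - ((1 / g xb) ^ 2 * f xb) • yb))).Nonempty ∧
    Metric.infDist xb (proxfC f C (α * (1 / g xb))
        (xb - α • (gradient h₁ xb - zb - ((1 / g xb) ^ 2 * f xb) • yb))) ≤ ε

/-- The product space `ℝⁿ × ℝⁿ × ℝⁿ × ℝ` on which `Q` lives. -/
abbrev E4 (n : ℕ) := En n × En n × En n × ℝ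

/-- The natural inner product on `ℝⁿ × ℝⁿ × ℝⁿ × ℝ`. -/
def inner4 (v w : E4 n) : ℝ :=
  (inner ℝ v.1 w.1 : ℝ) + (inner ℝ v.2.1 w.2.1 : ℝ) + (inner ℝ v.2.2.1 w.2.2.1 : ℝ)
    + v.2.2.2 * w.2.2.2

/-- The Fréchet subdifferential of an extended-real-valued function on
`ℝⁿ × ℝⁿ × ℝⁿ × ℝ`. -/
def fsubdiff4 (φ : E4 n → EReal) (w : E4 n) : Set (E4 n) :=
  {v | φ w ≠ ⊤ ∧ ∀ ε : ℝ, 0 < ε →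
      ∀ᶠ u in 𝓝 w, φ w + ((inner4 v (u - w) - ε * ‖u - w‖ : ℝ) : EReal) ≤ φ u}

/-- The limiting subdifferential of an extended-real-valued function on
`ℝⁿ × ℝⁿ × ℝⁿ × ℝ`. -/
def lsubdiff4 (φ : E4 n → EReal) (w : E4 n) : Set (E4 n) :=
  {v | ∃ (u : ℕ → E4 n) (q : ℕ → E4 n), Tendsto u atTop (𝓝 w) ∧
      Tendsto (fun k => φ (u k)) atTop (𝓝 (φ w)) ∧ Tendsto q atTop (𝓝 v) ∧
      ∀ k, q k ∈ fsubdiff4 φ (u k)}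

/-- The function `Q` as a function on the product space. -/
def QfunOf (f g h₁ h₂ : En n → ℝ) (C : Set (En n)) : E4 n → EReal :=
  fun w => Qaux f g h₁ h₂ C w.1 w.2.1 w.2.2.1 w.2.2.2

/-- The Kurdyka-Łojasiewicz property of `φ` at `w`. -/
def KLAt4 (φ : E4 n → EReal) (w : E4 n) : Prop :=
  ∃ ε : EReal, 0 < ε ∧ ∃ δ : ℝ, 0 < δ ∧ ∃ ψ ψ' : ℝ → ℝ,
    ψ 0 = 0 ∧
    ContinuousOn ψ {t : ℝ | 0 ≤ t ∧ (t : EReal) < ε} ∧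
    ConcaveOn ℝ {t : ℝ | 0 ≤ t ∧ (t : EReal) < ε} ψ ∧
    (∀ t : ℝ, 0 < t → (t : EReal) < ε → HasDerivAt ψ (ψ' t) t ∧ 0 < ψ' t) ∧
    ∀ u : E4 n, ‖u - w‖ < δ → φ w < φ u → φ u < φ w + ε →
      ∀ p ∈ lsubdiff4 φ u, 1 ≤ ψ' ((φ u - φ w).toReal) * ‖p‖

/-- The ℓ¹-norm on `ℝⁿ`. -/
def l1 (x : En n) : ℝ := ∑ i, |x i|

/-- The ℓ²-norm on `ℝⁿ`. -/
def l2 (x : En n) : ℝ := ‖x‖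

/-- `S_μ`, the set of vectors with at most `μ` nonzero entries. -/
def Smu (μ : ℕ) : Set (En n) := {z | {j | z j ≠ 0}.ncard ≤ μ}

/-- `h₁` for the robust signal recovery models: `(λ/2) ‖A x - b‖²`. -/
def h1L {m : ℕ} (A : En n →ₗ[ℝ] En m) (b : En m) (lam : ℝ) (x : En n) : ℝ :=
  lam / 2 * ‖A x - b‖ ^ 2

/-- `h₂` for the robust signal recovery models:
`(λ/2) ‖T_μ (A x - b)‖² = (λ/2) (‖A x - b‖² - dist²(A x - b, S_μ))`. -/
def h2L {m : ℕ} (A : En n →ₗ[ℝ] En m) (b : En m) (lam : ℝ) (μ : ℕ) (x : En n) : ℝ :=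
  lam / 2 * (‖A x - b‖ ^ 2 - (Metric.infDist (A x - b) (Smu μ)) ^ 2)

/-- The box constraint `{x : x̲ ≤ x ≤ x̄}`. -/
def box (xlo xhi : En n) : Set (En n) := {x | ∀ i, xlo i ≤ x i ∧ x i ≤ xhi i}



lemma conjF_ne_bot (φ : En n → ℝ) (y : En n) : conjF φ y ≠ ⊥ :=
  ((EReal.bot_lt_coe _).trans_le
    (le_iSup (fun x => (((inner ℝ x y : ℝ) - φ x : ℝ) : EReal)) 0)).ne'

lemma fenchel_young (φ : En n → ℝ) (x y : En n) :
    (((inner ℝ x y : ℝ) - φ x : ℝ) : EReal) ≤ conjF φ y :=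
  le_iSup (fun x => (((inner ℝ x y : ℝ) - φ x : ℝ) : EReal)) x

lemma exists_conjF_ne_top (g : En n → ℝ) (hg : ConvexOn ℝ univ g) :
    ∃ y, conjF g y ≠ ⊤ := by
  have hcont : Continuous g := hg.locallyLipschitz.continuous
  set E : Set (En n × ℝ) := {p | g p.1 ≤ p.2} with hE
  have hconv : Convex ℝ E := by
    have := hg.convex_epigraph
    simpa [Set.mem_univ, true_and] using this
  have hclosed : IsClosed E := by
    have : E = (fun p : En n × ℝ => p.2 - g p.1) ⁻¹' Ici 0 := by
      ext p; simp [hE, sub_nonneg]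
    rw [this]
    exact IsClosed.preimage (by fun_prop) isClosed_Ici
  have hx : ((0 : En n), g 0 - 1) ∉ E := by simp [hE]
  obtain ⟨φ, u, hu1, hu2⟩ := geometric_hahn_banach_point_closed hconv hclosed hx
  set β : ℝ := φ (0, 1) with hβ
  have hsplit : ∀ (x : En n) (t : ℝ), φ (x, t) = φ (x, 0) + t * β := by
    intro x t
    have : (x, t) = (x, (0:ℝ)) + t • ((0 : En n), (1:ℝ)) := by
      simp [Prod.ext_iff]
    rw [this, map_add, map_smul]; simp [hβ]
  have hβpos : 0 < β := by
    have h1 : φ (0, g 0 - 1) < u := hu1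
    have h2 : u < φ (0, g 0) := hu2 _ (by simp [hE])
    rw [hsplit] at h1 h2
    nlinarith
  have key : ∀ x : En n, u ≤ φ (x, 0) + g x * β := by
    intro x
    exact (hu2 (x, g x) (by simp [hE])).le.trans_eq (hsplit x (g x))
  set ψ : En n →L[ℝ] ℝ := φ.comp (ContinuousLinearMap.inl ℝ (En n) ℝ) with hψ
  refine ⟨(-β⁻¹) • (InnerProductSpace.toDual ℝ (En n)).symm ψ, ?_⟩
  have hbound : ∀ x : En n,
      (inner ℝ x ((-β⁻¹) • (InnerProductSpace.toDual ℝ (En n)).symm ψ) : ℝ) - g x ≤ -u/β := by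
    intro x
    have hip : (inner ℝ x ((-β⁻¹) • (InnerProductSpace.toDual ℝ (En n)).symm ψ) : ℝ)
        = (-β⁻¹) * φ (x, 0) := by
      rw [real_inner_smul_right, real_inner_comm, InnerProductSpace.toDual_symm_apply]
      simp [hψ]
    rw [hip]
    have hβ' : β ≠ 0 := hβpos.ne'
    rw [le_div_iff₀ hβpos]
    have h2 : (-β⁻¹ * φ (x, 0) - g x) * β = -(φ (x, 0)) - g x * β := by
      field_simp
    linarith [key x]
  have : conjF g ((-β⁻¹) • (InnerProductSpace.toDual ℝ (En n)).symm ψ) ≤ ((-u/β : ℝ) : EReal) := by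
    refine iSup_le fun x => ?_
    exact_mod_cast EReal.coe_le_coe_iff.mpr (hbound x)
  exact ne_top_of_le_ne_top (EReal.coe_ne_top _) this

lemma inner_expand (x xb y yb : En n) :
    (inner ℝ x y : ℝ) = (inner ℝ xb yb : ℝ) + (inner ℝ xb (y - yb) : ℝ)
      + (inner ℝ yb (x - xb) : ℝ) + (inner ℝ (x - xb) (y - yb) : ℝ) := by
  simp only [inner_sub_left, inner_sub_right]
  linarith [real_inner_comm yb x, real_inner_comm yb xb]

lemma inner4_eval (A B Cv : En n) (dv : ℝ) (x y z : En n) (c : ℝ) (xb yb zb : En n) (cb : ℝ) :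
    inner4 ((A, B, Cv, dv) : E4 n) (((x, y, z, c) : E4 n) - ((xb, yb, zb, cb) : E4 n))
      = (inner ℝ A (x - xb) : ℝ) + (inner ℝ B (y - yb) : ℝ) + (inner ℝ Cv (z - zb) : ℝ)
        + dv * (c - cb) := rfl

lemma abs_c_facts (c cb dd : ℝ) (hdc : |c - cb| ≤ dd) (hD1 : dd ≤ 1) :
    |c| ≤ |cb| + 1 ∧ c^2 ≤ (|cb|+1)^2 ∧ |c + cb| ≤ 2*|cb| + 1 := by
  have h1 : |c| ≤ |c - cb| + |cb| := by
    calc |c| = |(c - cb) + cb| := by ring_nf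
    _ ≤ |c - cb| + |cb| := abs_add_le _ _
  have h2 : |c| ≤ |cb| + 1 := by linarith
  refine ⟨h2, ?_, ?_⟩
  · nlinarith [sq_abs c, abs_nonneg c, abs_nonneg cb]
  · calc |c + cb| = |(c - cb) + 2*cb| := by ring_nf
    _ ≤ |c - cb| + |2*cb| := abs_add_le _ _
    _ ≤ dd + 2*|cb| := by rw [abs_mul]; simp [abs_of_nonneg]; linarith [le_refl (2*|cb|)]
    _ ≤ 2*|cb| + 1 := by linarith

lemma mu_bound (c cb G p1 p2 p3 p4 dd ny nx nw : ℝ)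
    (hdc : |c - cb| ≤ dd) (hD0 : 0 ≤ dd) (hD1 : dd ≤ 1)
    (hp1 : |p1| ≤ ny * dd) (hp2 : |p2| ≤ nx * dd) (hp4 : |p4| ≤ nw * dd) (hp3 : |p3| ≤ dd * dd) :
    |2*(c-cb) + (c^2-cb^2)*G + c^2*(p4-p1-p2) - c^2*p3|
      ≤ (2 + (2*|cb|+1)*|G| + (|cb|+1)^2*(nw+ny+nx+1)) * dd := by
  obtain ⟨hc, hc2, hsc⟩ := abs_c_facts c cb dd hdc hD1
  have hc20 : 0 ≤ c^2 := sq_nonneg c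
  have hA : |2*(c-cb)| ≤ 2*dd := by rw [abs_mul]; simp [abs_of_nonneg]; nlinarith
  have hB : |(c^2-cb^2)*G| ≤ (2*|cb|+1)*|G| * dd := by
    rw [abs_mul]
    have h3 : |c^2 - cb^2| = |c + cb| * |c - cb| := by rw [← abs_mul]; ring_nf
    have h4 : |c^2 - cb^2| ≤ (2*|cb|+1)*dd := by
      rw [h3]; nlinarith [abs_nonneg (c+cb), abs_nonneg (c-cb), abs_nonneg cb]
    nlinarith [abs_nonneg G, abs_nonneg (c^2-cb^2)]
  have hC : |c^2*(p4-p1-p2)| ≤ (|cb|+1)^2*((nw+ny+nx)*dd) := by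
    rw [abs_mul, abs_of_nonneg hc20]
    have h5 : |p4-p1-p2| ≤ (nw+ny+nx)*dd := by
      calc |p4-p1-p2| ≤ |p4| + |p1| + |p2| := by
            calc |p4-p1-p2| = |p4 + (-p1) + (-p2)| := by ring_nf
            _ ≤ |p4| + |(-p1)| + |(-p2)| := abs_add_three _ _ _
            _ = |p4| + |p1| + |p2| := by rw [abs_neg, abs_neg]
      _ ≤ (nw+ny+nx)*dd := by linarith
    nlinarith [abs_nonneg (p4-p1-p2), abs_nonneg cb, sq_nonneg (|cb|+1)]
  have hDd : |c^2*p3| ≤ (|cb|+1)^2*dd := by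
    rw [abs_mul, abs_of_nonneg hc20]
    calc c^2 * |p3| ≤ (|cb|+1)^2 * (dd*dd) :=
          mul_le_mul hc2 hp3 (abs_nonneg p3) (by positivity)
      _ ≤ (|cb|+1)^2 * dd :=
          mul_le_mul_of_nonneg_left (by nlinarith : dd*dd ≤ dd) (by positivity)
  calc |2*(c-cb) + (c^2-cb^2)*G + c^2*(p4-p1-p2) - c^2*p3|
      ≤ |2*(c-cb) + (c^2-cb^2)*G + c^2*(p4-p1-p2)| + |c^2*p3| := abs_sub _ _
    _ ≤ (|2*(c-cb)| + |(c^2-cb^2)*G| + |c^2*(p4-p1-p2)|) + |c^2*p3| := by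
        linarith [abs_add_three (2*(c-cb)) ((c^2-cb^2)*G) (c^2*(p4-p1-p2))]
    _ ≤ (2 + (2*|cb|+1)*|G| + (|cb|+1)^2*(nw+ny+nx+1)) * dd := by
        nlinarith [abs_nonneg cb, sq_nonneg (|cb|+1)]

lemma R_bound (c cb G p1 p2 p3 p4 dd ny nx nw : ℝ)
    (hdc : |c - cb| ≤ dd) (hD0 : 0 ≤ dd) (hD1 : dd ≤ 1)
    (hp1 : |p1| ≤ ny * dd) (hp2 : |p2| ≤ nx * dd) (hp4 : |p4| ≤ nw * dd) (hp3 : |p3| ≤ dd * dd) :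
    |(c-cb)^2*G + (c^2-cb^2)*(p4-p1-p2) - c^2*p3|
      ≤ (|G| + (2*|cb|+1)*(nw+ny+nx) + (|cb|+1)^2) * (dd*dd) := by
  obtain ⟨hc, hc2, hsc⟩ := abs_c_facts c cb dd hdc hD1
  have hc20 : 0 ≤ c^2 := sq_nonneg c
  have hsq : (c-cb)^2 ≤ dd*dd := by
    nlinarith [sq_abs (c-cb), mul_le_mul hdc hdc (abs_nonneg (c-cb)) hD0]
  have hA : |(c-cb)^2*G| ≤ |G| * (dd*dd) := by
    rw [abs_mul, abs_of_nonneg (sq_nonneg (c-cb))]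
    nlinarith [mul_le_mul_of_nonneg_right hsq (abs_nonneg G)]
  have hB : |(c^2-cb^2)*(p4-p1-p2)| ≤ (2*|cb|+1)*(nw+ny+nx)*(dd*dd) := by
    rw [abs_mul]
    have h3 : |c^2 - cb^2| = |c + cb| * |c - cb| := by rw [← abs_mul]; ring_nf
    have h4 : |c^2 - cb^2| ≤ (2*|cb|+1)*dd := by
      rw [h3]; nlinarith [abs_nonneg (c+cb), abs_nonneg (c-cb), abs_nonneg cb]
    have h5 : |p4-p1-p2| ≤ (nw+ny+nx)*dd := by
      calc |p4-p1-p2| = |p4 + (-p1) + (-p2)| := by ring_nf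
      _ ≤ |p4| + |(-p1)| + |(-p2)| := abs_add_three _ _ _
      _ = |p4| + |p1| + |p2| := by rw [abs_neg, abs_neg]
      _ ≤ (nw+ny+nx)*dd := by linarith
    nlinarith [abs_nonneg (c^2-cb^2), abs_nonneg (p4-p1-p2), abs_nonneg cb]
  have hDd : |c^2*p3| ≤ (|cb|+1)^2*(dd*dd) := by
    rw [abs_mul, abs_of_nonneg hc20]
    nlinarith [abs_nonneg p3, abs_nonneg cb, sq_nonneg (|cb|+1),
      mul_le_mul hc2 hp3 (abs_nonneg p3) (by positivity : (0:ℝ) ≤ (|cb|+1)^2)]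
  calc |(c-cb)^2*G + (c^2-cb^2)*(p4-p1-p2) - c^2*p3|
      ≤ |(c-cb)^2*G + (c^2-cb^2)*(p4-p1-p2)| + |c^2*p3| := abs_sub _ _
    _ ≤ (|(c-cb)^2*G| + |(c^2-cb^2)*(p4-p1-p2)|) + |c^2*p3| := by
        linarith [abs_add_le ((c-cb)^2*G) ((c^2-cb^2)*(p4-p1-p2))]
    _ ≤ (|G| + (2*|cb|+1)*(nw+ny+nx) + (|cb|+1)^2) * (dd*dd) := by linarith

set_option maxHeartbeats 2000000

/-- an explicit product set contained in the Fréchet subdifferential of the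
auxiliary function `Q` at `(x̄, ȳ, z̄, c̄)` with `c̄ = 1/g(x̄)`:
componentwise, in `x`: `(2c̄ + c̄²(g*(ȳ) - ⟨x̄,ȳ⟩)) ∂̂f_C(x̄) - c̄² f_C(x̄) ȳ + ∇h₁(x̄) - z̄`;
in `y`: `c̄² f_C(x̄) ∂g*(ȳ) - c̄² f_C(x̄) x̄`; in `z`: `∂̂h₂*(z̄) - x̄`; and in `c` the
singleton `{2 f_C(x̄) + 2 c̄ f_C(x̄) (g*(ȳ) - ⟨x̄,ȳ⟩)}`. -/
theorem statement16 (f g h₁ h₂ : En n → ℝ) (C : Set (En n))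
    (hSA : StandingAssumptions f g h₁ h₂ C)
    (xb yb zb : En n) (hxb : xb ∈ Omeg g ∩ C)
    (hyb : (eSubdiff (conjF g) yb).Nonempty)
    (hzb : conjF h₂ zb ≠ ⊤) :
    ∀ a ∈ fsubdiff (fun x : En n => if x ∈ C then ((f x : ℝ) : EReal) else ⊤) xb,
    ∀ w ∈ eSubdiff (conjF g) yb,
    ∀ bz ∈ fsubdiff (conjF h₂) zb,
      ((2 * (1 / g xb) + (1 / g xb) ^ 2 * ((conjF g yb).toReal - (inner ℝ xb yb : ℝ))) • a
          - ((1 / g xb) ^ 2 * f xb) • yb + gradient h₁ xb - zb,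
        ((1 / g xb) ^ 2 * f xb) • w - ((1 / g xb) ^ 2 * f xb) • xb,
        bz - xb,
        2 * f xb + 2 * (1 / g xb) * f xb * ((conjF g yb).toReal - (inner ℝ xb yb : ℝ)))
        ∈ fsubdiff4 (QfunOf f g h₁ h₂ C) (xb, yb, zb, 1 / g xb) := by
  obtain ⟨hxΩ, hxC⟩ := hxb
  obtain ⟨hf0, hg0, -, -, -, -, -, hfLip, hgconv, -, hh1⟩ := hSA
  intro a ha w hw bz hbz
  have hgb : 0 < g xb := lt_of_le_of_ne (hg0 xb) (Ne.symm hxΩ)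
  have hcb0 : 0 < 1 / g xb := by positivity
  obtain ⟨y₀, hy₀⟩ := exists_conjF_ne_top g hgconv
  have hGtop : conjF g yb ≠ ⊤ := by
    intro htop
    have h := hw y₀
    rw [htop, EReal.top_add_coe] at h
    exact hy₀ (top_le_iff.mp h)
  have hGbot : conjF g yb ≠ ⊥ := conjF_ne_bot g yb
  have hHtop : conjF h₂ zb ≠ ⊤ := hbz.1
  have hHbot : conjF h₂ zb ≠ ⊥ := conjF_ne_bot h₂ zb
  have hgstar : ∀ yv : En n, conjF g yv ≠ ⊤ →
      (conjF g yb).toReal + (inner ℝ w (yv - yb) : ℝ) ≤ (conjF g yv).toReal := by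
    intro yv hy
    have h := hw yv
    rw [← EReal.coe_toReal hGtop hGbot, ← EReal.coe_toReal hy (conjF_ne_bot g yv),
      ← EReal.coe_add] at h
    exact_mod_cast h
  have hFY : (inner ℝ xb yb : ℝ) - g xb ≤ (conjF g yb).toReal := by
    have h := fenchel_young g xb yb
    rw [← EReal.coe_toReal hGtop hGbot] at h
    exact_mod_cast h
  obtain ⟨s, hs, Kf, hKf⟩ := hfLip xb hxΩ
  obtain ⟨δf, hδf, hball⟩ := Metric.mem_nhds_iff.mp hs
  have hfLip' : ∀ᶠ xv in 𝓝 xb, |f xv - f xb| ≤ (Kf : ℝ) * ‖xv - xb‖ := by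
    filter_upwards [Metric.ball_mem_nhds xb hδf] with xv hx
    have := hKf.dist_le_mul xv (hball hx) xb (hball (Metric.mem_ball_self hδf))
    rwa [Real.dist_eq, dist_eq_norm] at this
  obtain ⟨δ₁, hδ₁, hgr, -⟩ := hh1 xb hxΩ
  have hgrad1 : HasGradientAt h₁ (gradient h₁ xb) xb := hgr xb (Metric.mem_ball_self hδ₁)
  -- basic scalar facts
  have hcbg : (1 / g xb) ^ 2 * g xb = (1 / g xb) := by field_simp
  have hmuge : (1 / g xb) ≤ (2 * (1 / g xb) + (1 / g xb) ^ 2 * ((conjF g yb).toReal - (inner ℝ xb yb : ℝ))) := by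
    have h1 : (1 / g xb) ^ 2 * (-(g xb)) ≤ (1 / g xb) ^ 2 * ((conjF g yb).toReal - (inner ℝ xb yb : ℝ)) :=
      mul_le_mul_of_nonneg_left (by linarith) (sq_nonneg _)
    nlinarith [h1, hcbg]
  have hmu0 : (0:ℝ) ≤ (2 * (1 / g xb) + (1 / g xb) ^ 2 * ((conjF g yb).toReal - (inner ℝ xb yb : ℝ))) := le_trans hcb0.le hmuge
  constructor
  · show Qaux f g h₁ h₂ C xb yb zb (1 / g xb) ≠ ⊤
    rw [Qaux, if_pos ⟨hxC, hGtop, hHtop⟩]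
    exact EReal.coe_ne_top _
  intro ε hε
  have hMU1 : (0:ℝ) < (2 * (1 / g xb) + (1 / g xb) ^ 2 * ((conjF g yb).toReal - (inner ℝ xb yb : ℝ))) + 1 := by linarith
  have hε₁pos : 0 < (ε / (6 * ((2 * (1 / g xb) + (1 / g xb) ^ 2 * ((conjF g yb).toReal - (inner ℝ xb yb : ℝ))) + 1))) := by
    apply div_pos hε; linarith only [hMU1]
  have hμbe : (2 * (1 / g xb) + (1 / g xb) ^ 2 * ((conjF g yb).toReal - (inner ℝ xb yb : ℝ))) * (ε / (6 * ((2 * (1 / g xb) + (1 / g xb) ^ 2 * ((conjF g yb).toReal - (inner ℝ xb yb : ℝ))) + 1))) ≤ ε / 6 := by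
    rw [← mul_div_assoc, div_le_div_iff₀ (by linarith only [hMU1]) (by norm_num : (0:ℝ) < 6)]
    nlinarith [mul_nonneg hmu0 hε.le]
  have hKmu0 : (0:ℝ) ≤ (2 + (2 * |(1 / g xb)| + 1) * |(conjF g yb).toReal - (inner ℝ xb yb : ℝ)| + (|(1 / g xb)| + 1) ^ 2 * (‖w‖ + ‖yb‖ + ‖xb‖ + 1)) := by positivity
  have hKR0 : (0:ℝ) ≤ (|(conjF g yb).toReal - (inner ℝ xb yb : ℝ)| + (2 * |(1 / g xb)| + 1) * (‖w‖ + ‖yb‖ + ‖xb‖) + (|(1 / g xb)| + 1) ^ 2) := by positivity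
  have hKtotpos : (0:ℝ) < (f xb * (|(conjF g yb).toReal - (inner ℝ xb yb : ℝ)| + (2 * |(1 / g xb)| + 1) * (‖w‖ + ‖yb‖ + ‖xb‖) + (|(1 / g xb)| + 1) ^ 2) + (Kf : ℝ) * (2 + (2 * |(1 / g xb)| + 1) * |(conjF g yb).toReal - (inner ℝ xb yb : ℝ)| + (|(1 / g xb)| + 1) ^ 2 * (‖w‖ + ‖yb‖ + ‖xb‖ + 1)) + 1) := by
    linarith only [mul_nonneg (hf0 xb) hKR0, mul_nonneg (NNReal.coe_nonneg Kf) hKmu0]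
  have hδ₀pos : (0:ℝ) < min 1 (ε / (2 * (f xb * (|(conjF g yb).toReal - (inner ℝ xb yb : ℝ)| + (2 * |(1 / g xb)| + 1) * (‖w‖ + ‖yb‖ + ‖xb‖) + (|(1 / g xb)| + 1) ^ 2) + (Kf : ℝ) * (2 + (2 * |(1 / g xb)| + 1) * |(conjF g yb).toReal - (inner ℝ xb yb : ℝ)| + (|(1 / g xb)| + 1) ^ 2 * (‖w‖ + ‖yb‖ + ‖xb‖ + 1)) + 1))) := lt_min one_pos (by positivity)
  have htx : Tendsto (fun u : E4 n => u.1)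
      (𝓝 ((xb, yb, zb, 1 / g xb) : E4 n)) (𝓝 xb) := continuous_fst.tendsto _
  have htz : Tendsto (fun u : E4 n => u.2.2.1)
      (𝓝 ((xb, yb, zb, 1 / g xb) : E4 n)) (𝓝 zb) :=
    (continuous_fst.comp (continuous_snd.comp continuous_snd)).tendsto _
  have hh₁ev : ∀ᶠ xv in 𝓝 xb,
      h₁ xb + (inner ℝ (gradient h₁ xb) (xv - xb) : ℝ) - ε / 6 * ‖xv - xb‖ ≤ h₁ xv := by
    have h2 := (hasGradientAt_iff_hasFDerivAt.mp hgrad1).isLittleO.def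
      (show (0:ℝ) < ε / 6 by linarith)
    filter_upwards [h2] with xv hx
    rw [InnerProductSpace.toDual_apply_apply, Real.norm_eq_abs] at hx
    have h3 := abs_le.mp hx
    linarith [h3.1]
  have Ea := htx.eventually hfLip'
  have Eb := htx.eventually (ha.2 (ε / (6 * ((2 * (1 / g xb) + (1 / g xb) ^ 2 * ((conjF g yb).toReal - (inner ℝ xb yb : ℝ))) + 1))) hε₁pos)
  have Ec := htx.eventually hh₁ev
  have Ed := htz.eventually (hbz.2 (ε / 6) (by linarith))
  have Ee : ∀ᶠ u : E4 n in 𝓝 ((xb, yb, zb, 1 / g xb) : E4 n),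
      ‖u - ((xb, yb, zb, 1 / g xb) : E4 n)‖ < min 1 (ε / (2 * (f xb * (|(conjF g yb).toReal - (inner ℝ xb yb : ℝ)| + (2 * |(1 / g xb)| + 1) * (‖w‖ + ‖yb‖ + ‖xb‖) + (|(1 / g xb)| + 1) ^ 2) + (Kf : ℝ) * (2 + (2 * |(1 / g xb)| + 1) * |(conjF g yb).toReal - (inner ℝ xb yb : ℝ)| + (|(1 / g xb)| + 1) ^ 2 * (‖w‖ + ‖yb‖ + ‖xb‖ + 1)) + 1))) := by
    filter_upwards [Metric.ball_mem_nhds ((xb, yb, zb, 1 / g xb) : E4 n) hδ₀pos] with u hu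
    rwa [Metric.mem_ball, dist_eq_norm] at hu
  filter_upwards [Ea, Eb, Ec, Ed, Ee] with u h1 h2 h3 h4 h5
  obtain ⟨x, y, z, c⟩ := u
  by_cases hcase : x ∈ C ∧ conjF g y ≠ ⊤ ∧ conjF h₂ z ≠ ⊤
  case neg =>
    show _ ≤ Qaux f g h₁ h₂ C x y z c
    rw [Qaux, if_neg hcase]
    exact le_top
  case pos =>
  show Qaux f g h₁ h₂ C xb yb zb (1 / g xb) + _ ≤ Qaux f g h₁ h₂ C x y z c
  rw [Qaux, Qaux, if_pos hcase, if_pos ⟨hxC, hGtop, hHtop⟩,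
    ← EReal.coe_add, EReal.coe_le_coe_iff]
  rw [inner4_eval]
  simp only [inner_sub_left, inner_add_left, real_inner_smul_left]
  rw [inner_expand x xb y yb, inner_expand x xb z zb]
  -- real hypotheses
  dsimp only at h1 h2 h3 h4
  simp only [if_pos hxC, if_pos hcase.1] at h2
  rw [← EReal.coe_add, EReal.coe_le_coe_iff] at h2
  rw [← EReal.coe_toReal hHtop hHbot, ← EReal.coe_toReal hcase.2.2 (conjF_ne_bot h₂ z),
    ← EReal.coe_add, EReal.coe_le_coe_iff] at h4
  have hgy : (conjF g yb).toReal + (inner ℝ w (y - yb) : ℝ) ≤ (conjF g y).toReal :=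
    hgstar y hcase.2.1
  -- abbreviations
  set cb : ℝ := 1 / g xb with hscb
  set GG : ℝ := (conjF g yb).toReal with hsGG
  set GY : ℝ := (conjF g y).toReal with hsGY
  set HH : ℝ := (conjF h₂ zb).toReal with hsHH
  set HZ : ℝ := (conjF h₂ z).toReal with hsHZ
  set II : ℝ := (inner ℝ xb yb : ℝ) with hsII
  set IZ : ℝ := (inner ℝ xb zb : ℝ) with hsIZ
  set iA : ℝ := (inner ℝ a (x - xb) : ℝ) with hsiA
  set iH : ℝ := (inner ℝ (gradient h₁ xb) (x - xb) : ℝ) with hsiH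
  set iB : ℝ := (inner ℝ bz (z - zb) : ℝ) with hsiB
  set p1 : ℝ := (inner ℝ yb (x - xb) : ℝ) with hsp1
  set p2 : ℝ := (inner ℝ xb (y - yb) : ℝ) with hsp2
  set p3 : ℝ := (inner ℝ (x - xb) (y - yb) : ℝ) with hsp3
  set p4 : ℝ := (inner ℝ w (y - yb) : ℝ) with hsp4
  set q1 : ℝ := (inner ℝ zb (x - xb) : ℝ) with hsq1
  set q2 : ℝ := (inner ℝ xb (z - zb) : ℝ) with hsq2
  set q3 : ℝ := (inner ℝ (x - xb) (z - zb) : ℝ) with hsq3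
  set KF : ℝ := (Kf : ℝ) with hsKF
  set fb : ℝ := f xb with hsfb
  set fx : ℝ := f x with hsfx
  set dxn : ℝ := ‖x - xb‖ with hsdxn
  set dzn : ℝ := ‖z - zb‖ with hsdzn
  set nw : ℝ := ‖w‖ with hsnw
  set nyb : ℝ := ‖yb‖ with hsnyb
  set nxb : ℝ := ‖xb‖ with hsnxb
  -- distances
  set dd : ℝ := ‖((x, y, z, c) : E4 n) - ((xb, yb, zb, cb) : E4 n)‖ with hdd
  have hD0 : (0:ℝ) ≤ dd := norm_nonneg _
  have hD1 : dd ≤ 1 := le_trans (le_of_lt h5) (min_le_left _ _)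
  have hDe : dd ≤ ε / (2 * (fb * (|GG - II| + (2 * |cb| + 1) * (nw + nyb + nxb) + (|cb| + 1) ^ 2)
      + KF * (2 + (2 * |cb| + 1) * |GG - II| + (|cb| + 1) ^ 2 * (nw + nyb + nxb + 1)) + 1)) :=
    le_trans (le_of_lt h5) (min_le_right _ _)
  have hdx : dxn ≤ dd := by
    rw [hdd, hsdxn]; exact norm_fst_le (((x,y,z,c) : E4 n) - ((xb,yb,zb,cb) : E4 n))
  have hdy : ‖y - yb‖ ≤ dd := by
    rw [hdd]
    exact le_trans (norm_fst_le ((((x,y,z,c) : E4 n) - ((xb,yb,zb,cb) : E4 n)).2))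
      (norm_snd_le (((x,y,z,c) : E4 n) - ((xb,yb,zb,cb) : E4 n)))
  have hdz : dzn ≤ dd := by
    rw [hdd, hsdzn]
    exact le_trans (le_trans
      (norm_fst_le ((((x,y,z,c) : E4 n) - ((xb,yb,zb,cb) : E4 n)).2.2))
      (norm_snd_le ((((x,y,z,c) : E4 n) - ((xb,yb,zb,cb) : E4 n)).2)))
      (norm_snd_le (((x,y,z,c) : E4 n) - ((xb,yb,zb,cb) : E4 n)))
  have hdc : |c - cb| ≤ dd := by
    rw [hdd, show |c - cb| = ‖((((x,y,z,c) : E4 n) - ((xb,yb,zb,cb) : E4 n)).2.2.2)‖ from rfl]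
    exact le_trans (le_trans
      (norm_snd_le ((((x,y,z,c) : E4 n) - ((xb,yb,zb,cb) : E4 n)).2.2))
      (norm_snd_le ((((x,y,z,c) : E4 n) - ((xb,yb,zb,cb) : E4 n)).2)))
      (norm_snd_le (((x,y,z,c) : E4 n) - ((xb,yb,zb,cb) : E4 n)))
  have hp1 : |p1| ≤ nyb * dd := by
    rw [hsp1, hsnyb]
    exact le_trans (abs_real_inner_le_norm yb (x - xb))
      (mul_le_mul_of_nonneg_left (hsdxn ▸ hdx) (norm_nonneg yb))
  have hp2 : |p2| ≤ nxb * dd := by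
    rw [hsp2, hsnxb]
    exact le_trans (abs_real_inner_le_norm xb (y - yb))
      (mul_le_mul_of_nonneg_left hdy (norm_nonneg xb))
  have hp4 : |p4| ≤ nw * dd := by
    rw [hsp4, hsnw]
    exact le_trans (abs_real_inner_le_norm w (y - yb))
      (mul_le_mul_of_nonneg_left hdy (norm_nonneg w))
  have hp3 : |p3| ≤ dd * dd := by
    rw [hsp3]
    exact le_trans (abs_real_inner_le_norm (x - xb) (y - yb))
      (mul_le_mul (hsdxn ▸ hdx) hdy (norm_nonneg _) hD0)
  have hq3 : |q3| ≤ dd * dd := by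
    rw [hsq3]
    exact le_trans (abs_real_inner_le_norm (x - xb) (z - zb))
      (mul_le_mul (hsdxn ▸ hdx) (hsdzn ▸ hdz) (norm_nonneg _) hD0)
  have hfx0 : (0:ℝ) ≤ fx := hf0 x
  have hfb0 : (0:ℝ) ≤ fb := hf0 xb
  have hKF0 : (0:ℝ) ≤ KF := NNReal.coe_nonneg Kf
  -- μ-bounds
  have hmu1 : |(2*c + c^2*(GG + p4 - (II + p2 + p1 + p3))) - (2*cb + cb^2*(GG - II))|
      ≤ (2 + (2*|cb|+1)*|GG - II| + (|cb|+1)^2*(nw+nyb+nxb+1)) * dd := by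
    have hform : (2*c + c^2*(GG + p4 - (II + p2 + p1 + p3))) - (2*cb + cb^2*(GG - II))
        = 2*(c - cb) + (c^2 - cb^2)*(GG - II) + c^2*(p4 - p1 - p2) - c^2*p3 := by ring
    rw [hform]
    exact mu_bound c cb (GG - II) p1 p2 p3 p4 dd nyb nxb nw hdc hD0 hD1 hp1 hp2 hp4 hp3
  have hRb : |(2*c + c^2*(GG + p4 - (II + p2 + p1 + p3))) - (2*cb + cb^2*(GG - II))
        - (2*(c - cb) + 2*cb*(c - cb)*(GG - II) + cb^2*(p4 - p1 - p2))|
      ≤ (|GG - II| + (2*|cb|+1)*(nw+nyb+nxb) + (|cb|+1)^2) * (dd*dd) := by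
    have hform : (2*c + c^2*(GG + p4 - (II + p2 + p1 + p3))) - (2*cb + cb^2*(GG - II))
        - (2*(c - cb) + 2*cb*(c - cb)*(GG - II) + cb^2*(p4 - p1 - p2))
        = (c - cb)^2*(GG - II) + (c^2 - cb^2)*(p4 - p1 - p2) - c^2*p3 := by ring
    rw [hform]
    exact R_bound c cb (GG - II) p1 p2 p3 p4 dd nyb nxb nw hdc hD0 hD1 hp1 hp2 hp4 hp3
  -- main chain
  have T1 : fx * (2*c + c^2*(GG + p4 - (II + p2 + p1 + p3)))
      ≤ 2*c*fx + c^2*fx*(GY - (II + p2 + p1 + p3)) := by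
    linarith only [mul_nonneg (mul_nonneg hfx0 (sq_nonneg c)) (sub_nonneg.mpr hgy)]
  have T3 : (2*cb + cb^2*(GG - II)) * (fb + (iA - ε / (6 * ((2*cb + cb^2*(GG - II)) + 1)) * dxn))
      ≤ (2*cb + cb^2*(GG - II)) * fx :=
    mul_le_mul_of_nonneg_left h2 hmu0
  have T4 : fb * ((2*(c - cb) + 2*cb*(c - cb)*(GG - II) + cb^2*(p4 - p1 - p2))
        - (|GG - II| + (2*|cb|+1)*(nw+nyb+nxb) + (|cb|+1)^2)*(dd*dd))
      ≤ fb * ((2*c + c^2*(GG + p4 - (II + p2 + p1 + p3))) - (2*cb + cb^2*(GG - II))) :=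
    mul_le_mul_of_nonneg_left (by linarith only [(abs_le.mp hRb).1]) hfb0
  have T5 : -(KF * ((2 + (2*|cb|+1)*|GG - II| + (|cb|+1)^2*(nw+nyb+nxb+1)) * (dd*dd)))
      ≤ (fx - fb) * ((2*c + c^2*(GG + p4 - (II + p2 + p1 + p3))) - (2*cb + cb^2*(GG - II))) := by
    have habs : |(fx - fb) * ((2*c + c^2*(GG + p4 - (II + p2 + p1 + p3))) - (2*cb + cb^2*(GG - II)))|
        ≤ (KF * dxn) * ((2 + (2*|cb|+1)*|GG - II| + (|cb|+1)^2*(nw+nyb+nxb+1)) * dd) := by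
      rw [abs_mul]
      exact mul_le_mul h1 hmu1 (abs_nonneg _) (by positivity)
    have hstep : (KF * dxn) * ((2 + (2*|cb|+1)*|GG - II| + (|cb|+1)^2*(nw+nyb+nxb+1)) * dd)
        ≤ KF * ((2 + (2*|cb|+1)*|GG - II| + (|cb|+1)^2*(nw+nyb+nxb+1)) * (dd*dd)) := by
      calc (KF * dxn) * ((2 + (2*|cb|+1)*|GG - II| + (|cb|+1)^2*(nw+nyb+nxb+1)) * dd)
          ≤ (KF * dd) * ((2 + (2*|cb|+1)*|GG - II| + (|cb|+1)^2*(nw+nyb+nxb+1)) * dd) :=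
            mul_le_mul_of_nonneg_right (mul_le_mul_of_nonneg_left hdx hKF0) (by positivity)
        _ = KF * ((2 + (2*|cb|+1)*|GG - II| + (|cb|+1)^2*(nw+nyb+nxb+1)) * (dd*dd)) := by ring
    linarith only [neg_abs_le ((fx - fb) * ((2*c + c^2*(GG + p4 - (II + p2 + p1 + p3)))
      - (2*cb + cb^2*(GG - II)))), (abs_le.mp habs).1, hstep]
  have T6 : q3 ≤ dd * dd := le_trans (le_abs_self _) hq3
  have T7a : (2*cb + cb^2*(GG - II)) * (ε / (6 * ((2*cb + cb^2*(GG - II)) + 1)) * dxn)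
      ≤ ε/6 * dd := by
    calc (2*cb + cb^2*(GG - II)) * (ε / (6 * ((2*cb + cb^2*(GG - II)) + 1)) * dxn)
        = ((2*cb + cb^2*(GG - II)) * (ε / (6 * ((2*cb + cb^2*(GG - II)) + 1)))) * dxn := by ring
      _ ≤ (ε/6) * dxn := mul_le_mul_of_nonneg_right hμbe (hsdxn ▸ norm_nonneg (x - xb))
      _ ≤ ε/6 * dd := mul_le_mul_of_nonneg_left hdx (by positivity)
  have T7b : ε/6 * dxn ≤ ε/6 * dd := mul_le_mul_of_nonneg_left hdx (by positivity)
  have T7c : ε/6 * dzn ≤ ε/6 * dd := mul_le_mul_of_nonneg_left hdz (by positivity)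
  have T8 : fb * ((|GG - II| + (2*|cb|+1)*(nw+nyb+nxb) + (|cb|+1)^2)*(dd*dd))
      + KF * ((2 + (2*|cb|+1)*|GG - II| + (|cb|+1)^2*(nw+nyb+nxb+1)) * (dd*dd)) + dd*dd
      ≤ ε/2 * dd := by
    have hKtot0 : (0:ℝ) < fb * (|GG - II| + (2*|cb|+1)*(nw+nyb+nxb) + (|cb|+1)^2)
        + KF * (2 + (2*|cb|+1)*|GG - II| + (|cb|+1)^2*(nw+nyb+nxb+1)) + 1 := by
      have h1 : (0:ℝ) ≤ fb * (|GG - II| + (2*|cb|+1)*(nw+nyb+nxb) + (|cb|+1)^2) :=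
        mul_nonneg hfb0 (by positivity)
      have h2 : (0:ℝ) ≤ KF * (2 + (2*|cb|+1)*|GG - II| + (|cb|+1)^2*(nw+nyb+nxb+1)) :=
        mul_nonneg hKF0 (by positivity)
      linarith
    have hKD : (fb * (|GG - II| + (2*|cb|+1)*(nw+nyb+nxb) + (|cb|+1)^2)
        + KF * (2 + (2*|cb|+1)*|GG - II| + (|cb|+1)^2*(nw+nyb+nxb+1)) + 1) * dd ≤ ε/2 := by
      calc (fb * (|GG - II| + (2*|cb|+1)*(nw+nyb+nxb) + (|cb|+1)^2)
            + KF * (2 + (2*|cb|+1)*|GG - II| + (|cb|+1)^2*(nw+nyb+nxb+1)) + 1) * dd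
          ≤ (fb * (|GG - II| + (2*|cb|+1)*(nw+nyb+nxb) + (|cb|+1)^2)
            + KF * (2 + (2*|cb|+1)*|GG - II| + (|cb|+1)^2*(nw+nyb+nxb+1)) + 1)
            * (ε / (2 * (fb * (|GG - II| + (2*|cb|+1)*(nw+nyb+nxb) + (|cb|+1)^2)
            + KF * (2 + (2*|cb|+1)*|GG - II| + (|cb|+1)^2*(nw+nyb+nxb+1)) + 1))) :=
            mul_le_mul_of_nonneg_left hDe (le_of_lt hKtot0)
        _ = ε/2 := by
            rw [mul_div_assoc']
            rw [div_eq_div_iff (ne_of_gt (by positivity)) (by norm_num : (2:ℝ) ≠ 0)]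
            ring
    linarith only [mul_le_mul_of_nonneg_right hKD hD0]
  linarith only [T1, T3, T4, T5, T6, T7a, T7b, T7c, T8, h3, h4]
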